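/- Every element of the braid group B_3 on three strands can be written as a product σ_{c_1}^{ε_1} σ_{c_2}^{ε_2} ⋯ σ_{c_k}^{ε_k} for some k ≥ 0, where each ε_j ∈ {1, −1}, each c_j ∈ {1, 2}, and consecutive indices alternate: c_j ≠ c_{j+1} for all 1 ≤ j < k. -/

import Mathlib

/-- The braid relations on `n` generators (indexed by `Fin n`, where index `i`
stands for `σ_{i+1}`). For `n = 2` this is the single relation
`σ_1 σ_2 σ_1 = σ_2 σ_1 σ_2`. -/
def braidRels (n : ℕ) : Set (FreeGroup (Fin n)) :=
  {r | (∃ i j : Fin n, (i : ℕ) + 1 = (j : ℕ) ∧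
          r = .of i * .of j * .of i * (.of j * .of i * .of j)⁻¹) ∨
       (∃ i j : Fin n, (i : ℕ) + 2 ≤ (j : ℕ) ∧
          r = .of i * .of j * (.of j * .of i)⁻¹)}

/-- The braid group on `n` strands. -/
abbrev BraidGroup (n : ℕ) := PresentedGroup (braidRels (n - 1))

/-- The Artin generator `σ_i` of the braid group on `n` strands, for `1 ≤ i ≤ n − 1`
(and junk value `1` otherwise). -/
noncomputable def σ {n : ℕ} (i : ℕ) : BraidGroup n :=
  if h : 1 ≤ i ∧ i ≤ n - 1 then PresentedGroup.of ⟨i - 1, by omega⟩ else 1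

lemma brd : (σ 1 : BraidGroup 3) * σ 2 * σ 1 = σ 2 * σ 1 * σ 2 := by
  have e1 : (σ 1 : BraidGroup 3) = PresentedGroup.of ⟨0, by omega⟩ := by simp [σ]
  have e2 : (σ 2 : BraidGroup 3) = PresentedGroup.of ⟨1, by omega⟩ := by simp [σ]
  rw [e1, e2]
  have h : (PresentedGroup.mk (braidRels 2)
      (.of ⟨0, by omega⟩ * .of ⟨1, by omega⟩ * .of ⟨0, by omega⟩ *
        (.of ⟨1, by omega⟩ * .of ⟨0, by omega⟩ * .of ⟨1, by omega⟩)⁻¹)) = 1 := by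
    apply (QuotientGroup.eq_one_iff _).mpr
    apply Subgroup.subset_normalClosure
    exact Or.inl ⟨⟨0, by omega⟩, ⟨1, by omega⟩, rfl, rfl⟩
  simp only [map_mul, map_inv] at h
  have := mul_eq_one_iff_eq_inv.mp h
  rwa [inv_inv] at this
lemma brdi : (σ 2 : BraidGroup 3)⁻¹ * (σ 1)⁻¹ * (σ 2)⁻¹ = (σ 1)⁻¹ * (σ 2)⁻¹ * (σ 1)⁻¹ := by
  rw [← inv_inj]
  simp only [mul_inv_rev, inv_inv, ← mul_assoc]
  exact brd.symm
noncomputable def evalL (L : List (ℕ × ℤ)) : BraidGroup 3 :=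
  (L.map fun p => σ p.1 ^ p.2).prod
lemma evalL_nil : evalL [] = 1 := rfl
lemma evalL_cons (p : ℕ × ℤ) (L : List (ℕ × ℤ)) :
    evalL (p :: L) = σ p.1 ^ p.2 * evalL L := by simp [evalL]
lemma evalL_append (L M : List (ℕ × ℤ)) :
    evalL (L ++ M) = evalL L * evalL M := by simp [evalL]
lemma sq11 : evalL [(2,1),(1,1),(2,1),(1,-1),(2,-1),(1,1)] = σ 1 ^ (1:ℤ) * σ 1 ^ (1:ℤ) := by
  simp only [evalL_cons, evalL_nil, zpow_one, zpow_neg, mul_one, ← mul_assoc]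
  rw [show (σ 2 : BraidGroup 3) * σ 1 * σ 2 = σ 1 * σ 2 * σ 1 from brd.symm]
  group
lemma sq1n : evalL [(2,-1),(1,-1),(2,-1),(1,1),(2,1),(1,-1)] = σ 1 ^ (-1:ℤ) * σ 1 ^ (-1:ℤ) := by
  simp only [evalL_cons, evalL_nil, zpow_one, zpow_neg, mul_one, ← mul_assoc]
  rw [brdi]; group
lemma sq21 : evalL [(1,1),(2,1),(1,1),(2,-1),(1,-1),(2,1)] = σ 2 ^ (1:ℤ) * σ 2 ^ (1:ℤ) := by
  simp only [evalL_cons, evalL_nil, zpow_one, zpow_neg, mul_one, ← mul_assoc]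
  rw [brd]; group
lemma sq2n : evalL [(1,-1),(2,-1),(1,-1),(2,1),(1,1),(2,-1)] = σ 2 ^ (-1:ℤ) * σ 2 ^ (-1:ℤ) := by
  simp only [evalL_cons, evalL_nil, zpow_one, zpow_neg, mul_one, ← mul_assoc]
  rw [brdi.symm]; group

def Alt (L : List (ℕ × ℤ)) : Prop :=
  (∀ p ∈ L, (p.1 = 1 ∨ p.1 = 2) ∧ (p.2 = 1 ∨ p.2 = -1)) ∧
    L.Chain' (fun p q => p.1 ≠ q.1)

lemma prepend (L : List (ℕ × ℤ)) (hL : Alt L) (c : ℕ) (e : ℤ)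
    (hc : c = 1 ∨ c = 2) (he : e = 1 ∨ e = -1) :
    ∃ L', Alt L' ∧ evalL L' = σ c ^ e * evalL L := by
  obtain ⟨hmem, hch⟩ := hL
  match L with
  | [] =>
    exact ⟨[(c, e)], ⟨by simp [hc, he], List.isChain_singleton _⟩, by simp [evalL_cons, evalL_nil]⟩
  | (d, f) :: rest =>
    have hch' := List.isChain_cons.mp hch
    have hmem' : ∀ p ∈ rest, (p.1 = 1 ∨ p.1 = 2) ∧ (p.2 = 1 ∨ p.2 = -1) :=
      fun p hp => hmem p (List.mem_cons_of_mem _ hp)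
    by_cases hcd : c = d
    · subst hcd
      by_cases hef : f = -e
      · refine ⟨rest, ⟨hmem', hch'.2⟩, ?_⟩
        subst hef
        rw [evalL_cons]
        simp [← zpow_add]
      · have hf : f = e := by
          rcases he with rfl | rfl <;> rcases (hmem _ List.mem_cons_self).2 with h | h <;>
            simp_all <;> omega
        subst hf
        -- pick the square word
        obtain ⟨X, hXmem, hXch, hXlast, hXeval⟩ :
            ∃ X : List (ℕ × ℤ),
              (∀ p ∈ X, (p.1 = 1 ∨ p.1 = 2) ∧ (p.2 = 1 ∨ p.2 = -1)) ∧
              X.Chain' (fun p q => p.1 ≠ q.1) ∧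
              X.getLast? = some (c, f) ∧
              evalL X = σ c ^ f * σ c ^ f := by
          rcases hc with rfl | rfl <;> rcases he with rfl | rfl
          · exact ⟨[(2,1),(1,1),(2,1),(1,-1),(2,-1),(1,1)], by decide, by norm_num [List.Chain', List.isChain_cons_cons, List.isChain_singleton], rfl, sq11⟩
          · exact ⟨[(2,-1),(1,-1),(2,-1),(1,1),(2,1),(1,-1)], by decide, by norm_num [List.Chain', List.isChain_cons_cons, List.isChain_singleton], rfl, sq1n⟩
          · exact ⟨[(1,1),(2,1),(1,1),(2,-1),(1,-1),(2,1)], by decide, by norm_num [List.Chain', List.isChain_cons_cons, List.isChain_singleton], rfl, sq21⟩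
          · exact ⟨[(1,-1),(2,-1),(1,-1),(2,1),(1,1),(2,-1)], by decide, by norm_num [List.Chain', List.isChain_cons_cons, List.isChain_singleton], rfl, sq2n⟩
        refine ⟨X ++ rest, ⟨?_, ?_⟩, ?_⟩
        · intro p hp
          rcases List.mem_append.mp hp with h | h
          · exact hXmem p h
          · exact hmem' p h
        · unfold List.Chain'
          rw [List.isChain_append]
          refine ⟨hXch, hch'.2, ?_⟩
          intro x hx y hy
          rw [hXlast] at hx
          simp only [Option.mem_def, Option.some.injEq] at hx
          subst hx
          exact hch'.1 y (by simpa using hy)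
        · rw [evalL_append, hXeval, evalL_cons, mul_assoc]
    · refine ⟨(c, e) :: (d, f) :: rest, ⟨?_, ?_⟩, by rw [evalL_cons]⟩
      · intro p hp
        rcases List.mem_cons.mp hp with rfl | h
        · exact ⟨hc, he⟩
        · exact hmem p h
      · exact List.isChain_cons_cons.mpr ⟨hcd, hch⟩

lemma exists_alt (g : BraidGroup 3) : ∃ L, Alt L ∧ g = evalL L := by
  obtain ⟨x, rfl⟩ := PresentedGroup.mk_surjective (braidRels 2) g
  rw [← FreeGroup.mk_toWord (x := x)]
  generalize x.toWord = w
  induction w with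
  | nil =>
    exact ⟨[], ⟨by simp, List.isChain_nil⟩, by rw [show FreeGroup.mk [] = (1 : FreeGroup (Fin 2)) from rfl, map_one, evalL_nil]⟩
  | cons a w ih =>
    obtain ⟨L, hL, hev⟩ := ih
    have hsplit : FreeGroup.mk (a :: w) = FreeGroup.mk [a] * FreeGroup.mk w := by
      rw [FreeGroup.mul_mk]; rfl
    obtain ⟨i, b⟩ := a
    have hone : (PresentedGroup.mk (braidRels 2) (FreeGroup.mk [(i, b)]) : BraidGroup 3)
        = σ (n := 3) ((i : ℕ) + 1) ^ (if b then (1:ℤ) else -1) := by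
      have hof : (PresentedGroup.of i : BraidGroup 3) = σ ((i : ℕ) + 1) := by
        simp only [σ]
        rw [dif_pos (by omega)]
        congr 1 <;> omega
      cases b
      · have : FreeGroup.mk [(i, false)] = (FreeGroup.of i)⁻¹ := rfl
        rw [this, map_inv]
        simp [← hof, PresentedGroup.of]
      · have : FreeGroup.mk [(i, true)] = FreeGroup.of i := rfl
        rw [this]
        simpa [PresentedGroup.of] using hof
    obtain ⟨L', hL', hev'⟩ := prepend L hL ((i : ℕ) + 1) (if b then (1:ℤ) else -1)
      (by omega) (by cases b <;> simp)
    refine ⟨L', hL', ?_⟩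
    rw [hsplit, map_mul, hone, hev]
    exact hev'.symm

/-- Every element of the braid group `B_3` can be written as a product
`σ_{c_1}^{ε_1} ⋯ σ_{c_k}^{ε_k}` with each `c_j ∈ {1, 2}`, each `ε_j ∈ {1, −1}`, and
consecutive indices alternating. -/
theorem threeStrandBraid_alternating (g : BraidGroup 3) :
    ∃ (k : ℕ) (c : Fin k → ℕ) (ε : Fin k → ℤ),
      (∀ j, c j = 1 ∨ c j = 2) ∧
      (∀ j, ε j = 1 ∨ ε j = -1) ∧
      (∀ (j : ℕ) (h : j + 1 < k), c ⟨j, by omega⟩ ≠ c ⟨j + 1, h⟩) ∧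
      g = (List.ofFn fun j : Fin k => σ (n := 3) (c j) ^ ε j).prod := by
  obtain ⟨L, ⟨hmem, hch⟩, hg⟩ := exists_alt g
  refine ⟨L.length, fun j => (L.get j).1, fun j => (L.get j).2, ?_, ?_, ?_, ?_⟩
  · exact fun j => (hmem _ (L.get_mem j)).1
  · exact fun j => (hmem _ (L.get_mem j)).2
  · intro j h
    exact List.isChain_iff_getElem.mp hch j (by omega)
  · rw [hg]
    have : (List.ofFn fun j : Fin L.length => σ (n := 3) (L.get j).1 ^ (L.get j).2)
        = L.map fun p => σ p.1 ^ p.2 := by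
      simpa using List.ofFn_getElem_eq_map L (fun p => σ (n := 3) p.1 ^ p.2)
    rw [this]; rfl
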